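/- Let b ∈ C¹([0,1]) with ϑ/100 ≤ |b'| ≤ 100/ϑ on [0,1]. There exists a constant C depending only on ϑ such that for all y₀ ∈ [0,1] and all ε ∈ (0,1/4], ∫₀¹ |log(b(z) − b(y₀) + iε)|^m dz ≤ C^m · m! for every integer m ≥ 1. -/

import Mathlib

open Complex

private lemma aux_pow_le_exp (s : ℝ) (hs : 0 ≤ s) (m : ℕ) :
    s ^ m ≤ 2 ^ m * (Nat.factorial m : ℝ) * Real.exp (s / 2) := by
  have h0 : (0:ℝ) ≤ s / 2 := by linarith
  have h1 : (s/2) ^ m / (Nat.factorial m : ℝ) ≤ Real.exp (s / 2) := by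
    refine le_trans ?_ (Real.sum_le_exp_of_nonneg h0 (m+1))
    exact Finset.single_le_sum (f := fun i => (s/2) ^ i / (Nat.factorial i : ℝ))
      (fun i _ => by positivity) (Finset.self_mem_range_succ m)
  have hm : (0:ℝ) < (Nat.factorial m : ℝ) := by exact_mod_cast m.factorial_pos
  have h2 : (s/2) ^ m ≤ (Nat.factorial m : ℝ) * Real.exp (s / 2) := by
    rw [div_le_iff₀ hm] at h1; linarith [h1]
  have h3 : s ^ m = 2 ^ m * (s/2) ^ m := by
    rw [← mul_pow]; ring_nf
  rw [h3, mul_assoc]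
  have : (0:ℝ) < 2 ^ m := by positivity
  nlinarith [h2, this]

private lemma aux_rpow_neg_half_of_neg {x : ℝ} (hx : x < 0) : x ^ (-(1/2) : ℝ) = 0 := by
  rw [Real.rpow_def_of_neg hx]
  have : Real.cos (-(1/2) * Real.pi) = 0 := by
    rw [show (-(1/2) * Real.pi : ℝ) = -(Real.pi/2) by ring, Real.cos_neg, Real.cos_pi_div_two]
  rw [this, mul_zero]

private lemma aux_rpow_half_of_neg {x : ℝ} (hx : x < 0) : x ^ ((1/2) : ℝ) = 0 := by
  rw [Real.rpow_def_of_neg hx]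
  have : Real.cos ((1/2) * Real.pi) = 0 := by
    rw [show ((1/2) * Real.pi : ℝ) = Real.pi/2 by ring, Real.cos_pi_div_two]
  rw [this, mul_zero]

/-- mean value bounds -/
private lemma aux_mvt {b : ℝ → ℝ} (hb : ContDiffOn ℝ 1 b (Set.Icc 0 1)) {ℓ L : ℝ}
    (hder : ∀ y ∈ Set.Icc (0:ℝ) 1, ℓ ≤ |deriv b y| ∧ |deriv b y| ≤ L)
    {x y : ℝ} (hx : x ∈ Set.Icc (0:ℝ) 1) (hy : y ∈ Set.Icc (0:ℝ) 1) :
    ℓ * |x - y| ≤ |b x - b y| ∧ |b x - b y| ≤ L * |x - y| := by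
  have hdiff : DifferentiableOn ℝ b (Set.Icc 0 1) := hb.differentiableOn one_ne_zero
  have key : ∀ u v : ℝ, u ∈ Set.Icc (0:ℝ) 1 → v ∈ Set.Icc (0:ℝ) 1 → u < v →
      ℓ * |v - u| ≤ |b v - b u| ∧ |b v - b u| ≤ L * |v - u| := by
    intro u v hu hv huv
    have hcont : ContinuousOn b (Set.Icc u v) :=
      hb.continuousOn.mono (Set.Icc_subset_Icc hu.1 hv.2)
    have hders : ∀ z ∈ Set.Ioo u v, HasDerivAt b (deriv b z) z := by
      intro z hz
      have hz01 : z ∈ Set.Ioo (0:ℝ) 1 := ⟨lt_of_le_of_lt hu.1 hz.1, lt_of_lt_of_le hz.2 hv.2⟩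
      have : DifferentiableAt ℝ b z :=
        (hdiff z ⟨hz01.1.le, hz01.2.le⟩).differentiableAt
          (Icc_mem_nhds hz01.1 hz01.2)
      exact this.hasDerivAt
    obtain ⟨c, hc, hcslope⟩ := exists_hasDerivAt_eq_slope b (deriv b) huv hcont hders
    have hc01 : c ∈ Set.Icc (0:ℝ) 1 :=
      ⟨le_of_lt (lt_of_le_of_lt hu.1 hc.1), le_of_lt (lt_of_lt_of_le hc.2 hv.2)⟩
    have hvu : (0:ℝ) < v - u := by linarith
    have habs : |b v - b u| = |deriv b c| * (v - u) := by
      have : b v - b u = deriv b c * (v - u) := by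
        field_simp at hcslope; linarith [hcslope]
      rw [this, abs_mul, abs_of_pos hvu]
    obtain ⟨hl, hr⟩ := hder c hc01
    constructor
    · rw [abs_of_pos hvu, habs]
      exact mul_le_mul_of_nonneg_right hl hvu.le
    · rw [habs, abs_of_pos hvu]
      exact mul_le_mul_of_nonneg_right hr hvu.le
  rcases lt_trichotomy x y with h | h | h
  · have := key x y hx hy h
    rwa [abs_sub_comm y x, abs_sub_comm (b y) (b x)] at this
  · subst h; simp
  · exact key y x hy hx h

theorem log_moment_bound (ϑ : ℝ) (hϑ : ϑ ∈ Set.Ioo (0:ℝ) (1/10)) :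
    ∃ C : ℝ, 0 < C ∧
      ∀ (b : ℝ → ℝ), ContDiffOn ℝ 1 b (Set.Icc 0 1) →
        (∀ y ∈ Set.Icc (0:ℝ) 1, ϑ/100 ≤ |deriv b y| ∧ |deriv b y| ≤ 100/ϑ) →
      ∀ y₀ ∈ Set.Icc (0:ℝ) 1, ∀ ε ∈ Set.Ioc (0:ℝ) (1/4), ∀ m : ℕ, 1 ≤ m →
        (∫ z in (0:ℝ)..1, ‖Complex.log ((b z : ℂ) - (b y₀ : ℂ) + ε * I)‖ ^ m)
          ≤ C ^ m * (Nat.factorial m : ℝ) := by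
  obtain ⟨hϑ0, hϑ1⟩ := hϑ
  set R : ℝ := 100 / ϑ with hR
  have hR1 : (1:ℝ) ≤ R := by
    rw [hR, le_div_iff₀ hϑ0]; linarith
  have hlogR : 0 ≤ Real.log R := Real.log_nonneg hR1
  have hlogR1 : 0 ≤ Real.log (R + 1) := Real.log_nonneg (by linarith)
  set A : ℝ := Real.pi + Real.log (R + 1) + Real.log R with hA
  have hA0 : 0 < A := by
    have := Real.pi_pos; rw [hA]; linarith
  set E : ℝ := Real.exp (A / 2) with hE
  have hE1 : (1:ℝ) ≤ E := by
    rw [hE, ← Real.exp_zero]; exact Real.exp_le_exp.mpr (by linarith)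
  refine ⟨8 * E, by positivity, ?_⟩
  intro b hb hder y₀ hy₀ ε hε m hm
  set K : ℝ := 2 ^ m * (Nat.factorial m : ℝ) * E with hK
  have hK0 : 0 ≤ K := by positivity
  set w : ℝ → ℂ := fun z => (b z : ℂ) - (b y₀ : ℂ) + ε * I with hw
  set f : ℝ → ℝ := fun z => ‖Complex.log (w z)‖ ^ m with hf
  set g : ℝ → ℝ := fun z => K * ((z - y₀) ^ (-(1/2) : ℝ) + (y₀ - z) ^ (-(1/2) : ℝ)) with hg
  -- pointwise bound
  have hpoint : ∀ z ∈ Set.Icc (0:ℝ) 1, z ≠ y₀ → f z ≤ g z := by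
    intro z hz hzy
    set d : ℝ := |z - y₀| with hd
    have hd0 : 0 < d := abs_pos.mpr (sub_ne_zero.mpr hzy)
    have hd1 : d ≤ 1 := by
      rw [hd, abs_sub_le_iff]
      obtain ⟨a1, a2⟩ := hz; obtain ⟨b1, b2⟩ := hy₀
      constructor <;> linarith
    obtain ⟨hmvtl, hmvtu⟩ := aux_mvt hb hder hz hy₀
    have hre : (w z).re = b z - b y₀ := by simp [hw]
    have him : (w z).im = ε := by simp [hw]
    have hwne : w z ≠ 0 := by
      intro h; rw [h] at him; simp at him; exact absurd him.symm (ne_of_gt hε.1)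
    have habs0 : 0 < ‖w z‖ := norm_pos_iff.mpr hwne
    have hupper : ‖w z‖ ≤ R + 1 := by
      have h1 : ‖w z‖ ≤ |(w z).re| + |(w z).im| := Complex.norm_le_abs_re_add_abs_im _
      rw [hre, him] at h1
      have h2 : |b z - b y₀| ≤ R * d := by rw [hd, hR]; exact hmvtu
      have h3 : R * d ≤ R := by nlinarith
      have h4 : |ε| ≤ 1 := by rw [abs_of_pos hε.1]; linarith [hε.2]
      linarith
    have hlower : ϑ / 100 * d ≤ ‖w z‖ := by
      have h1 : |(w z).re| ≤ ‖w z‖ := Complex.abs_re_le_norm _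
      rw [hre] at h1
      have h2 : ϑ / 100 * d ≤ |b z - b y₀| := by rw [hd]; exact hmvtl
      linarith
    have hlogabs : |Real.log (‖w z‖)| ≤ Real.log (R+1) + Real.log R + |Real.log d| := by
      have hld : Real.log d ≤ 0 := Real.log_nonpos hd0.le hd1
      have hlda : |Real.log d| = -Real.log d := abs_of_nonpos hld
      rw [abs_le]
      constructor
      · have h1 : Real.log (ϑ / 100 * d) ≤ Real.log (‖w z‖) :=
          Real.log_le_log (by positivity) hlower
        have h2 : Real.log (ϑ / 100 * d) = Real.log (ϑ/100) + Real.log d :=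
          Real.log_mul (by positivity) hd0.ne'
        have h3 : Real.log (ϑ/100) = - Real.log R := by
          rw [hR, ← Real.log_inv]; norm_num
        rw [h2, h3] at h1
        rw [hlda]; linarith
      · have h1 : Real.log (‖w z‖) ≤ Real.log (R + 1) :=
          Real.log_le_log habs0 hupper
        have : 0 ≤ |Real.log d| := abs_nonneg _
        linarith
    have hnormlog : ‖Complex.log (w z)‖ ≤ A + |Real.log d| := by
      have h1 : Complex.log (w z) =
          (Real.log (‖w z‖) : ℂ) + (Complex.arg (w z) : ℂ) * I := rfl
      have h2 : ‖Complex.log (w z)‖ ≤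
          ‖(Real.log (‖w z‖) : ℂ)‖ + ‖(Complex.arg (w z) : ℂ) * I‖ := by
        rw [h1]; exact norm_add_le _ _
      have h3 : ‖(Real.log (‖w z‖) : ℂ)‖ = |Real.log (‖w z‖)| := by
        simp
      have h4 : ‖(Complex.arg (w z) : ℂ) * I‖ = |Complex.arg (w z)| := by
        simp
      have h5 := Complex.abs_arg_le_pi (w z)
      rw [h3, h4] at h2
      rw [hA]; linarith [hlogabs]
    have hs0 : 0 ≤ A + |Real.log d| := by positivity
    have hexp : (A + |Real.log d|) ^ m ≤ K * d ^ (-(1/2) : ℝ) := by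
      have h1 := aux_pow_le_exp (A + |Real.log d|) hs0 m
      have h2 : Real.exp ((A + |Real.log d|)/2) = E * d ^ (-(1/2) : ℝ) := by
        have hld : Real.log d ≤ 0 := Real.log_nonpos hd0.le hd1
        have hlda : |Real.log d| = -Real.log d := abs_of_nonpos hld
        rw [hlda, show (A + -Real.log d)/2 = A/2 + Real.log d * (-(1/2)) by ring,
          Real.exp_add, hE, Real.rpow_def_of_pos hd0]
      rw [h2] at h1
      calc (A + |Real.log d|) ^ m ≤ 2 ^ m * (Nat.factorial m : ℝ) * (E * d ^ (-(1/2):ℝ)) := h1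
        _ = K * d ^ (-(1/2) : ℝ) := by rw [hK]; ring
    have hdsplit : d ^ (-(1/2) : ℝ) ≤ (z - y₀) ^ (-(1/2) : ℝ) + (y₀ - z) ^ (-(1/2) : ℝ) := by
      rcases lt_or_gt_of_ne (sub_ne_zero.mpr hzy) with h | h
      · have e1 : (z - y₀) ^ (-(1/2) : ℝ) = 0 := aux_rpow_neg_half_of_neg h
        have e2 : d = y₀ - z := by rw [hd, abs_of_neg h]; ring
        rw [e1, e2]; simp
      · have e1 : (y₀ - z) ^ (-(1/2) : ℝ) = 0 := aux_rpow_neg_half_of_neg (by linarith)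
        have e2 : d = z - y₀ := by rw [hd, abs_of_pos h]
        rw [e1, e2]; simp
    have hfz : f z ≤ (A + |Real.log d|) ^ m := by
      rw [hf]
      exact pow_le_pow_left₀ (norm_nonneg _) hnormlog m
    calc f z ≤ (A + |Real.log d|) ^ m := hfz
      _ ≤ K * d ^ (-(1/2) : ℝ) := hexp
      _ ≤ K * ((z - y₀) ^ (-(1/2) : ℝ) + (y₀ - z) ^ (-(1/2) : ℝ)) :=
          mul_le_mul_of_nonneg_left hdsplit hK0
      _ = g z := rfl
  -- integrability of majorant pieces
  have hint1 : IntervalIntegrable (fun z => (z - y₀) ^ (-(1/2) : ℝ)) MeasureTheory.volume 0 1 := by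
    have := (intervalIntegral.intervalIntegrable_rpow' (a := -y₀) (b := 1 - y₀)
      (r := -(1/2)) (by norm_num)).comp_sub_right y₀
    simpa using this
  have hint2 : IntervalIntegrable (fun z => (y₀ - z) ^ (-(1/2) : ℝ)) MeasureTheory.volume 0 1 := by
    have := (intervalIntegral.intervalIntegrable_rpow' (a := y₀ - 1) (b := y₀)
      (r := -(1/2)) (by norm_num)).comp_sub_left y₀
    simpa using this.symm
  have hintg : IntervalIntegrable g MeasureTheory.volume 0 1 := by
    rw [hg]; exact ((hint1.add hint2).const_mul K)
  have haene : ∀ᵐ z : ℝ, z ≠ y₀ := by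
    refine MeasureTheory.ae_iff.mpr ?_
    simpa using MeasureTheory.measure_singleton (μ := MeasureTheory.volume) y₀
  have hfmeas : MeasureTheory.AEStronglyMeasurable f
      (MeasureTheory.volume.restrict (Set.uIoc (0:ℝ) 1)) := by
    have hIoc : Set.uIoc (0:ℝ) 1 = Set.Ioc (0:ℝ) 1 := Set.uIoc_of_le (by norm_num)
    rw [hIoc]
    have hbm : AEMeasurable b (MeasureTheory.volume.restrict (Set.Ioc (0:ℝ) 1)) :=
      (hb.continuousOn.mono (Set.Ioc_subset_Icc_self)).aemeasurable measurableSet_Ioc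
    have hwm : AEMeasurable w (MeasureTheory.volume.restrict (Set.Ioc (0:ℝ) 1)) := by
      rw [hw]
      exact ((Complex.measurable_ofReal.comp_aemeasurable hbm).sub_const _).add_const _
    exact ((Complex.measurable_log.norm.pow_const m).comp_aemeasurable hwm).aestronglyMeasurable
  have haeIoc : f ≤ᵐ[MeasureTheory.volume.restrict (Set.uIoc (0:ℝ) 1)] g := by
    have hIoc : Set.uIoc (0:ℝ) 1 = Set.Ioc (0:ℝ) 1 := Set.uIoc_of_le (by norm_num)
    rw [hIoc]
    filter_upwards [MeasureTheory.ae_restrict_mem measurableSet_Ioc,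
      MeasureTheory.ae_restrict_of_ae haene] with z hz hne
    exact hpoint z ⟨hz.1.le, hz.2⟩ hne
  have hintf : IntervalIntegrable f MeasureTheory.volume 0 1 := by
    refine hintg.mono_fun' hfmeas ?_
    filter_upwards [haeIoc] with z hz
    have h0 : 0 ≤ f z := by rw [hf]; positivity
    rwa [Real.norm_eq_abs, _root_.abs_of_nonneg h0]
  have haeIcc : f ≤ᵐ[MeasureTheory.volume.restrict (Set.Icc (0:ℝ) 1)] g := by
    filter_upwards [MeasureTheory.ae_restrict_mem measurableSet_Icc,
      MeasureTheory.ae_restrict_of_ae haene] with z hz hne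
    exact hpoint z hz hne
  -- integrals of the majorant pieces
  have hI1 : (∫ z in (0:ℝ)..1, (z - y₀) ^ (-(1/2) : ℝ)) ≤ 2 := by
    rw [intervalIntegral.integral_comp_sub_right (fun x => x ^ (-(1/2):ℝ)) y₀,
      integral_rpow (Or.inl (by norm_num))]
    have h1 : ((1:ℝ) - y₀) ^ (-(1/2) + 1 : ℝ) ≤ 1 :=
      Real.rpow_le_one (by linarith [hy₀.2]) (by linarith [hy₀.1]) (by norm_num)
    have h2 : 0 ≤ ((0:ℝ) - y₀) ^ (-(1/2) + 1 : ℝ) := by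
      rcases eq_or_lt_of_le hy₀.1 with h | h
      · rw [← h]; norm_num
      · rw [show (0:ℝ) - y₀ = -y₀ by ring]
        rw [show (-(1/2) + 1 : ℝ) = (1/2 : ℝ) by norm_num]
        rw [aux_rpow_half_of_neg (by linarith)]
    rw [div_le_iff₀ (by norm_num : (0:ℝ) < -(1/2) + 1)]
    linarith
  have hI2 : (∫ z in (0:ℝ)..1, (y₀ - z) ^ (-(1/2) : ℝ)) ≤ 2 := by
    rw [intervalIntegral.integral_comp_sub_left (fun x => x ^ (-(1/2):ℝ)) y₀,
      integral_rpow (Or.inl (by norm_num))]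
    have h1 : (y₀ : ℝ) ^ (-(1/2) + 1 : ℝ) ≤ 1 :=
      Real.rpow_le_one hy₀.1 hy₀.2 (by norm_num)
    have h2 : 0 ≤ (y₀ - 1 : ℝ) ^ (-(1/2) + 1 : ℝ) := by
      rcases eq_or_lt_of_le hy₀.2 with h | h
      · rw [h]; norm_num
      · rw [show (-(1/2) + 1 : ℝ) = (1/2 : ℝ) by norm_num]
        rw [aux_rpow_half_of_neg (by linarith)]
    rw [sub_zero, div_le_iff₀ (by norm_num : (0:ℝ) < -(1/2) + 1)]
    linarith
  have hIg : (∫ z in (0:ℝ)..1, g z) ≤ K * 4 := by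
    have : (∫ z in (0:ℝ)..1, g z)
        = K * ((∫ z in (0:ℝ)..1, (z - y₀) ^ (-(1/2) : ℝ))
            + (∫ z in (0:ℝ)..1, (y₀ - z) ^ (-(1/2) : ℝ))) := by
      rw [hg, intervalIntegral.integral_const_mul, intervalIntegral.integral_add hint1 hint2]
    rw [this]
    have := add_le_add hI1 hI2
    nlinarith [hK0]
  have hmono : (∫ z in (0:ℝ)..1, f z) ≤ ∫ z in (0:ℝ)..1, g z :=
    intervalIntegral.integral_mono_ae_restrict (by norm_num) hintf hintg haeIcc
  have hfinal : K * 4 ≤ (8 * E) ^ m * (Nat.factorial m : ℝ) := by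
    have hmne : m ≠ 0 := by omega
    have h4 : (4:ℝ) ≤ 4 ^ m := le_self_pow₀ (by norm_num) hmne
    have hEm : E ≤ E ^ m := le_self_pow₀ hE1 hmne
    have hE0 : (0:ℝ) ≤ E := by linarith
    have key : E * 4 ≤ E ^ m * 4 ^ m := by
      have := mul_le_mul hEm h4 (by norm_num) (le_trans hE0 hEm)
      linarith
    have h8 : ((8:ℝ) * E) ^ m = 2 ^ m * (E ^ m * 4 ^ m) := by
      rw [mul_pow, show ((8:ℝ)) = 2 * 4 by norm_num, mul_pow]; ring
    calc K * 4 = 2 ^ m * (E * 4) * (Nat.factorial m : ℝ) := by rw [hK]; ring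
      _ ≤ 2 ^ m * (E ^ m * 4 ^ m) * (Nat.factorial m : ℝ) := by
          have hfac : (0:ℝ) ≤ (Nat.factorial m : ℝ) := by positivity
          have h2m : (0:ℝ) ≤ 2 ^ m := by positivity
          apply mul_le_mul_of_nonneg_right _ hfac
          exact mul_le_mul_of_nonneg_left key h2m
      _ = (8 * E) ^ m * (Nat.factorial m : ℝ) := by rw [h8]
  calc (∫ z in (0:ℝ)..1, ‖Complex.log ((b z : ℂ) - (b y₀ : ℂ) + ε * I)‖ ^ m)
      = ∫ z in (0:ℝ)..1, f z := by rfl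
    _ ≤ ∫ z in (0:ℝ)..1, g z := hmono
    _ ≤ K * 4 := hIg
    _ ≤ (8 * E) ^ m * (Nat.factorial m : ℝ) := hfinal
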